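/- Let n = 2 and let 1 ≤ i < j ≤ m−2. Then β_j >_PS β_i; that is, every profile of 2 preferences over m candidates at which β_i is manipulable is also a profile at which β_j is manipulable, and there exists a profile at which β_j is manipulable but β_i is not. -/

import Mathlib

/-- A preference order on `m` candidates: `σ c` is the position of candidate `c`
(position `0` is the most preferred). `σ c < σ d` means `c` is strictly preferred to `d`. -/
abbrev Pref (m : ℕ) := Fin m ≃ Fin m

/-- A voting rule for `n` voters and `m` candidates. -/
abbrev Rule (m n : ℕ) := (Fin n → Pref m) → Fin m

/-- Total score of candidate `c` under score vector `s` (indexed by position) at profile `P`. -/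
def score {m n : ℕ} (s : Fin m → ℕ) (P : Fin n → Pref m) (c : Fin m) : ℕ :=
  ∑ v, s (P v c)

/-- The scoring rule with score vector `s`: the winner is the candidate that is first in the
lexicographic tie-breaking order (i.e. has the least index) among those of maximal score. -/
def winner {m n : ℕ} [NeZero m] (s : Fin m → ℕ) (P : Fin n → Pref m) : Fin m :=
  (Finset.univ.filter fun c => ∀ d, score s P d ≤ score s P c).min' (by
    obtain ⟨c, -, hc⟩ := Finset.exists_max_image Finset.univ (score s P) Finset.univ_nonempty
    exact ⟨c, Finset.mem_filter.mpr ⟨Finset.mem_univ c, fun d => hc d (Finset.mem_univ d)⟩⟩)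

/-- `k`-approval, `α_k`: one point for each of the top `k` positions. -/
def approval (m n k : ℕ) [NeZero m] : Rule m n :=
  winner (fun r => if (r : ℕ) < k then 1 else 0)

/-- `k`-Borda, `β_k`: `max (0, k - r + 1)` points for (`1`-indexed) position `r`, i.e. `k - r`
(truncated subtraction) points for `0`-indexed position `r`. -/
def kBorda (m n k : ℕ) [NeZero m] : Rule m n :=
  winner (fun r => k - (r : ℕ))

/-- `f` is manipulable at profile `P`: some voter `v` can misreport some preference `Q` and
obtain an outcome strictly preferred (by `v`'s true preferences) to the sincere outcome. -/
def Manipulable {m n : ℕ} (f : Rule m n) (P : Fin n → Pref m) : Prop :=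
  ∃ (v : Fin n) (Q : Pref m), P v (f (Function.update P v Q)) < P v (f P)

/-- `f ≥_PS g` : every profile at which `g` is manipulable is one at which `f` is manipulable. -/
def MoreManip {m n : ℕ} (f g : Rule m n) : Prop :=
  ∀ P : Fin n → Pref m, Manipulable g P → Manipulable f P

set_option linter.unnecessarySimpa false

-- helpers
lemma winner_le {m n : ℕ} [NeZero m] {s : Fin m → ℕ} {P : Fin n → Pref m} {x : Fin m}
    (hx : ∀ d, score s P d ≤ score s P x) : winner s P ≤ x := by
  unfold winner
  exact Finset.min'_le _ _ (Finset.mem_filter.mpr ⟨Finset.mem_univ x, hx⟩)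

lemma winner_max {m n : ℕ} [NeZero m] (s : Fin m → ℕ) (P : Fin n → Pref m) (d : Fin m) :
    score s P d ≤ score s P (winner s P) := by
  have h : winner s P ∈ Finset.univ.filter fun c => ∀ d, score s P d ≤ score s P c := by
    unfold winner; exact Finset.min'_mem _ _
  exact (Finset.mem_filter.mp h).2 d

lemma winner_eq {m n : ℕ} [NeZero m] {s : Fin m → ℕ} {P : Fin n → Pref m} {b : Fin m}
    (h1 : ∀ d, score s P d ≤ score s P b)
    (h2 : ∀ d, score s P b ≤ score s P d → b ≤ d) : winner s P = b :=
  le_antisymm (winner_le h1) (h2 _ (winner_max s P b))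

lemma winner_ne {m n : ℕ} [NeZero m] {s : Fin m → ℕ} {P : Fin n → Pref m} {b x : Fin m}
    (hbx : b < x) (hs : score s P x ≤ score s P b) : winner s P ≠ x := by
  intro h
  have h1 : ∀ d, score s P d ≤ score s P x := h ▸ winner_max s P
  have h2 : winner s P ≤ b := winner_le (fun d => (h1 d).trans hs)
  rw [h] at h2
  exact absurd hbx (not_lt.mpr h2)

lemma fin2_univ (v u : Fin 2) (h : v ≠ u) : (Finset.univ : Finset (Fin 2)) = {v, u} := by
  fin_cases v <;> fin_cases u <;> simp_all <;> decide

lemma fin2_cases (v u : Fin 2) (h : v ≠ u) (x : Fin 2) : x = v ∨ x = u := by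
  fin_cases v <;> fin_cases u <;> fin_cases x <;> simp_all

lemma score_two {m : ℕ} (s : Fin m → ℕ) (P : Fin 2 → Pref m) (v u : Fin 2) (h : v ≠ u)
    (d : Fin m) : score s P d = s (P v d) + s (P u d) := by
  rw [score, fin2_univ v u h, Finset.sum_pair h]

lemma manip_of {m j : ℕ} [NeZero m] (hj1 : 1 ≤ j) (hjm : j + 2 ≤ m)
    (P : Fin 2 → Pref m) (v u : Fin 2) (hvu : v ≠ u) (c : Fin m)
    (hpref : P v c < P v (kBorda m 2 j P))
    (hcond : ((P u c : ℕ) < j ∨ c < (P u).symm 0)) :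
    Manipulable (kBorda m 2 j) P := by
  obtain ⟨m', rfl⟩ : ∃ m', m = m' + 1 := ⟨m - 1, by omega⟩
  set ρ := P u with hρ
  set p : Fin (m' + 1) := Fin.rev (ρ c) with hp
  set Q : Pref (m' + 1) := ρ.trans (Fin.revPerm.trans (Fin.cycleRange p : Equiv.Perm (Fin (m' + 1)))) with hQ
  have hQval : ∀ d, Q d = Fin.cycleRange p (Fin.rev (ρ d)) := by
    intro d; simp [hQ, Equiv.trans_apply, Fin.revPerm]
  have hQc : Q c = 0 := by rw [hQval, ← hp, Fin.cycleRange_self]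
  have hkey : ∀ d : Fin (m' + 1), d ≠ c →
      1 ≤ ((Q d : ℕ)) ∧ m' ≤ (Q d : ℕ) + (ρ d : ℕ) := by
    intro d hdc
    have hxp : Fin.rev (ρ d) ≠ p := by
      rw [hp]
      intro h
      exact hdc (ρ.injective (Fin.rev_injective h))
    have hxval : (Fin.rev (ρ d) : ℕ) + (ρ d : ℕ) = m' := by
      rw [Fin.val_rev]
      have := (ρ d).isLt
      omega
    rcases lt_or_gt_of_ne hxp with h | h
    · have h1 : Q d = Fin.rev (ρ d) + 1 := by rw [hQval]; exact Fin.cycleRange_of_lt h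
      have h2 : ((Fin.rev (ρ d) + 1 : Fin (m' + 1)) : ℕ) = (Fin.rev (ρ d) : ℕ) + 1 := by
        apply Fin.val_add_one_of_lt
        exact lt_of_lt_of_le h (Fin.le_last p)
      rw [h1, h2]
      omega
    · have h1 : Q d = Fin.rev (ρ d) := by rw [hQval]; exact Fin.cycleRange_of_gt h
      have h3 : 0 < (Fin.rev (ρ d) : ℕ) := by
        have : (p : ℕ) < (Fin.rev (ρ d) : ℕ) := h
        omega
      rw [h1]
      omega
  refine ⟨v, Q, ?_⟩
  have hwin : kBorda (m' + 1) 2 j (Function.update P v Q) = c := by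
    have hsc : ∀ d, score (fun r => j - (r : ℕ)) (Function.update P v Q) d
        = (j - (Q d : ℕ)) + (j - (ρ d : ℕ)) := by
      intro d
      rw [score_two _ _ v u hvu, Function.update_self, Function.update_of_ne (Ne.symm hvu)]
    have hscc : score (fun r => j - (r : ℕ)) (Function.update P v Q) c
        = j + (j - (ρ c : ℕ)) := by
      rw [hsc, hQc]; simp
    show winner _ _ = c
    have main : ∀ d, (score (fun r => j - (r : ℕ)) (Function.update P v Q) d
          ≤ score (fun r => j - (r : ℕ)) (Function.update P v Q) c) ∧
        (score (fun r => j - (r : ℕ)) (Function.update P v Q) c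
          ≤ score (fun r => j - (r : ℕ)) (Function.update P v Q) d → c ≤ d) := by
      intro d
      by_cases hdc : d = c
      · subst hdc; exact ⟨le_refl _, fun _ => le_refl _⟩
      obtain ⟨h1, h2⟩ := hkey d hdc
      rw [hsc d, hscc]
      by_cases hρd : (ρ d : ℕ) = 0
      · have hd0 : ρ d = 0 := Fin.ext hρd
        have hdtop : (P u).symm 0 = d := by rw [Equiv.symm_apply_eq]; exact hd0.symm
        constructor
        · omega
        · intro hle
          rcases hcond with h | h
          · omega
          · rw [hdtop] at h
            exact h.le
      · constructor
        · omega
        · intro hle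
          exfalso
          omega
    exact winner_eq (fun d => (main d).1) (fun d => (main d).2)
  rw [hwin]
  exact hpref

lemma step2 {m i j : ℕ} [NeZero m] (hi : 1 ≤ i) (hij : i < j) (hjm : j + 2 ≤ m)
    (P : Fin 2 → Pref m) (v u : Fin 2) (hvu : v ≠ u)
    (hw : P u (kBorda m 2 j P) = 0)
    (hMj : ¬ Manipulable (kBorda m 2 j) P) :
    ¬ Manipulable (kBorda m 2 i) P := by
  set w := kBorda m 2 j P with hwdef
  have hw0 : ((P u w : Fin m) : ℕ) = 0 := by rw [hw]; simp
  have H : ∀ c, P v c < P v w → j ≤ (P u c : ℕ) ∧ w < c := by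
    intro c hc
    by_contra hcon
    apply hMj
    apply manip_of (by omega) hjm P v u hvu c hc
    rcases lt_or_ge ((P u c : ℕ)) j with h | h
    · exact Or.inl h
    · right
      have hcw : ¬ w < c := fun h' => hcon ⟨h, h'⟩
      have hne : c ≠ w := by intro h'; rw [h'] at hc; exact lt_irrefl _ hc
      have hsm : (P u).symm 0 = w := by rw [Equiv.symm_apply_eq, hw]
      rw [hsm]
      exact lt_of_le_of_ne (not_lt.mp hcw) hne
  have hscjw : ∀ d, score (fun r => i - (r : ℕ)) P d
      = (i - (P v d : ℕ)) + (i - (P u d : ℕ)) :=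
    fun d => score_two _ _ v u hvu d
  have hwi : kBorda m 2 i P = w := by
    show winner _ _ = w
    have main : ∀ d, (score (fun r => i - (r : ℕ)) P d ≤ score (fun r => i - (r : ℕ)) P w) ∧
        (score (fun r => i - (r : ℕ)) P w ≤ score (fun r => i - (r : ℕ)) P d → w ≤ d) := by
      intro d
      rw [hscjw d, hscjw w]
      rcases lt_trichotomy (P v d) (P v w) with h | h | h
      · obtain ⟨hju, hwd⟩ := H d h
        constructor
        · omega
        · intro _; exact hwd.le
      · have : d = w := (P v).injective h
        subst this
        exact ⟨le_refl _, fun _ => le_refl _⟩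
      · have hdw : d ≠ w := fun h' => by rw [h'] at h; exact lt_irrefl _ h
        have hud : (P u d : ℕ) ≠ 0 := by
          intro h0
          exact hdw ((P u).injective (by rw [hw]; exact Fin.ext (by simpa using h0)))
        have hvd : (P v w : ℕ) < (P v d : ℕ) := h
        constructor
        · omega
        · intro hle; exfalso; omega
    exact winner_eq (fun d => (main d).1) (fun d => (main d).2)
  rintro ⟨v', Q, hlt⟩
  rw [hwi] at hlt
  rcases fin2_cases v u hvu v' with rfl | rfl
  · set w' := kBorda m 2 i (Function.update P v' Q) with hw'
    obtain ⟨hju, hww'⟩ := H w' hlt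
    have hscore : score (fun r => i - (r : ℕ)) (Function.update P v' Q) w'
        ≤ score (fun r => i - (r : ℕ)) (Function.update P v' Q) w := by
      rw [score_two _ _ v' u hvu, score_two _ _ v' u hvu,
        Function.update_self, Function.update_of_ne (Ne.symm hvu)]
      omega
    exact winner_ne hww' hscore hw'.symm
  · rw [hw] at hlt
    have : (P v' (kBorda m 2 i (Function.update P v' Q)) : ℕ) < 0 := by
      simpa [Fin.lt_def] using hlt
    omega

lemma part1 {m i j : ℕ} [NeZero m] (hi : 1 ≤ i) (hij : i < j) (hjm : j + 2 ≤ m) :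
    MoreManip (kBorda m 2 j) (kBorda m 2 i) := by
  intro P hMi
  by_contra hMj
  have hex : ∃ u : Fin 2, P u (kBorda m 2 j P) = 0 := by
    by_contra hno
    push_neg at hno
    have htop : ∀ v u : Fin 2, v ≠ u →
        j ≤ (P u ((P v).symm 0) : ℕ) ∧ ¬ ((P v).symm 0 < (P u).symm 0) := by
      intro v u hvu
      by_contra hcon
      apply hMj
      have hpref : P v ((P v).symm 0) < P v (kBorda m 2 j P) := by
        rw [Equiv.apply_symm_apply]
        exact (Fin.pos_iff_ne_zero' _).mpr (hno v)
      apply manip_of (by omega) hjm P v u hvu _ hpref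
      rcases lt_or_ge ((P u ((P v).symm 0) : ℕ)) j with h | h
      · exact Or.inl h
      · refine Or.inr ?_
        by_contra h2
        exact hcon ⟨h, h2⟩
    obtain ⟨hA, hB⟩ := htop 0 1 (by decide)
    obtain ⟨hA', hB'⟩ := htop 1 0 (by decide)
    have heq : (P 0).symm 0 = (P 1).symm 0 :=
      le_antisymm (not_lt.mp hB') (not_lt.mp hB)
    rw [heq, Equiv.apply_symm_apply] at hA
    simp at hA
    omega
  obtain ⟨u, hu⟩ := hex
  obtain ⟨v, hvu⟩ : ∃ v : Fin 2, v ≠ u := by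
    fin_cases u
    · exact ⟨1, by decide⟩
    · exact ⟨0, by decide⟩
  exact step2 hi hij hjm P v u hvu hu hMj hMi


lemma part2 {m i j : ℕ} [NeZero m] (hi : 1 ≤ i) (hij : i < j) (hjm : j + 2 ≤ m) :
    ∃ P : Fin 2 → Pref m,
      Manipulable (kBorda m 2 j) P ∧ ¬ Manipulable (kBorda m 2 i) P := by
  set o : Fin m := ⟨0, by omega⟩ with ho
  set l : Fin m := ⟨1, by omega⟩ with hl
  set cst : Fin m := ⟨i, by omega⟩ with hc
  have hoval : (o : ℕ) = 0 := rfl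
  have hlval : (l : ℕ) = 1 := rfl
  have hcval : (cst : ℕ) = i := rfl
  have hol : o ≠ l := Fin.ne_of_val_ne (by omega)
  have hoc : o ≠ cst := Fin.ne_of_val_ne (by omega)
  set σ1 : Pref m := (Equiv.swap l cst).trans (Equiv.swap o l) with hσ
  obtain ⟨Pw, hPwd⟩ : ∃ Pw : Fin 2 → Pref m, Pw = ![Equiv.refl (Fin m), σ1] := ⟨_, rfl⟩
  have hPw0 : Pw 0 = Equiv.refl (Fin m) := by rw [hPwd]; simp
  have hPw1 : Pw 1 = σ1 := by rw [hPwd]; simp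
  have hσc : σ1 cst = o := by
    rw [hσ]
    simp only [Equiv.trans_apply, Equiv.swap_apply_right]
  have hσo : σ1 o = l := by
    rw [hσ]
    simp only [Equiv.trans_apply]
    rw [Equiv.swap_apply_of_ne_of_ne hol hoc, Equiv.swap_apply_left]
  have hσl : l ≠ cst → σ1 l = cst := by
    intro h
    rw [hσ]
    simp only [Equiv.trans_apply]
    rw [Equiv.swap_apply_left,
      Equiv.swap_apply_of_ne_of_ne (Ne.symm hoc) (Ne.symm h)]
  have hσd : ∀ d : Fin m, d ≠ o → d ≠ l → d ≠ cst → σ1 d = d := by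
    intro d h1 h2 h3
    rw [hσ]
    simp only [Equiv.trans_apply]
    rw [Equiv.swap_apply_of_ne_of_ne h2 h3, Equiv.swap_apply_of_ne_of_ne h1 h2]
  have hsck : ∀ (k : ℕ) (d : Fin m), score (fun r => k - (r : ℕ)) Pw d
      = (k - (d : ℕ)) + (k - ((σ1 d) : ℕ)) := by
    intro k d
    rw [score_two _ _ 0 1 (by decide), hPw0, hPw1]
    simp
  have hwin : ∀ k : ℕ, 1 ≤ k → kBorda m 2 k Pw = o := by
    intro k hk
    show winner _ _ = o
    have main : ∀ d, score (fun r => k - (r : ℕ)) Pw d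
        ≤ score (fun r => k - (r : ℕ)) Pw o := by
      intro d
      rw [hsck, hsck, hσo]
      by_cases h1 : d = cst
      · subst h1; rw [hσc]; omega
      by_cases h2 : d = o
      · subst h2; rw [hσo]
      by_cases h3 : d = l
      · subst h3
        rw [hσl (fun he => h1 he)]
        omega
      · rw [hσd d h2 h3 h1]
        have e0 : (d : ℕ) ≠ 0 := fun hh => h2 (Fin.ext hh)
        have e1 : (d : ℕ) ≠ 1 := fun hh => h3 (Fin.ext hh)
        omega
    exact winner_eq main (fun d _ => Fin.mk_le_of_le_val (Nat.zero_le _))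
  refine ⟨Pw, ?_, ?_⟩
  · apply manip_of (by omega) hjm Pw 1 0 (by decide) cst ?_ ?_
    · rw [hwin j (by omega), hPw1, hσc, hσo]
      exact Fin.lt_def.mpr (by omega)
    · left
      rw [hPw0]
      simpa using hij
  · rintro ⟨v, Q, hlt⟩
    rw [hwin i hi] at hlt
    rcases fin2_cases 0 1 (by decide) v with rfl | rfl
    · rw [hPw0] at hlt
      have := Fin.lt_def.mp hlt
      simp [Fin.lt_def, hoval] at this
    · rw [hPw1, hσo] at hlt
      have h2 : σ1 (kBorda m 2 i (Function.update Pw 1 Q)) = o := by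
        apply Fin.ext
        have := Fin.lt_def.mp hlt
        omega
      have h3 : kBorda m 2 i (Function.update Pw 1 Q) = cst :=
        σ1.injective (by rw [h2, hσc])
      have e0 : Function.update Pw 1 Q 0 = Pw 0 := Function.update_of_ne (by decide) _ _
      have e1 : Function.update Pw 1 Q 1 = Q := Function.update_self _ _ _
      have hsc : score (fun r => i - (r : ℕ)) (Function.update Pw 1 Q) cst
          ≤ score (fun r => i - (r : ℕ)) (Function.update Pw 1 Q) o := by
        rw [score_two _ _ 0 1 (by decide), score_two _ _ 0 1 (by decide),
          e0, e1, hPw0]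
        simp only [Equiv.refl_apply]
        omega
      have hne := winner_ne (Fin.lt_def.mpr (by omega : (o : ℕ) < (cst : ℕ))) hsc
      exact hne h3


/-- For `n = 2` and `1 ≤ i < j ≤ m-2`: `β_j >_PS β_i`, i.e. every profile at which `β_i`
is manipulable is one at which `β_j` is manipulable, and there is a profile at which `β_j`
is manipulable but `β_i` is not. -/
theorem stmt_18 (m i j : ℕ) [NeZero m] (hi : 1 ≤ i) (hij : i < j) (hj : j ≤ m - 2) :
    MoreManip (kBorda m 2 j) (kBorda m 2 i) ∧
    ∃ P : Fin 2 → Pref m,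
      Manipulable (kBorda m 2 j) P ∧ ¬ Manipulable (kBorda m 2 i) P := by
  have hjm : j + 2 ≤ m := by omega
  exact ⟨part1 hi hij hjm, part2 hi hij hjm⟩
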